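/- Suppose a function χ ∈ OR is Lebesgue integrable over [1,∞). Then χ is bounded on [1,∞), and t·χ(t) → 0 as t → ∞. -/

import Mathlib

open MeasureTheory Filter Set

/-- A Borel measurable function `χ : [1,∞) → (0,∞)` is OR-varying at infinity:
there exist `a > 1` and `c ≥ 1` with `c⁻¹ ≤ χ(λt)/χ(t) ≤ c` for all `t ≥ 1`, `λ ∈ [1,a]`. -/
def ORClass (χ : ℝ → ℝ) : Prop :=
  Measurable χ ∧ (∀ t, 1 ≤ t → 0 < χ t) ∧
    ∃ a > 1, ∃ c ≥ 1, ∀ t, 1 ≤ t → ∀ l, 1 ≤ l → l ≤ a →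
      c⁻¹ ≤ χ (l * t) / χ t ∧ χ (l * t) / χ t ≤ c

/-- If `χ ∈ OR` is Lebesgue integrable over `[1,∞)`, then `χ` is bounded on `[1,∞)`
and `t · χ(t) → 0` as `t → ∞`. -/
theorem bounded_and_tendsto_zero_of_or_integrable (χ : ℝ → ℝ) (hχ : ORClass χ)
    (hint : IntegrableOn χ (Set.Ici (1 : ℝ))) :
    (∃ M : ℝ, ∀ t, 1 ≤ t → χ t ≤ M) ∧
      Tendsto (fun t => t * χ t) atTop (nhds 0) := by
  obtain ⟨hmeas, hpos, a, ha, c, hc, hOR⟩ := hχ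
  have hc0 : (0:ℝ) < c := lt_of_lt_of_le one_pos hc
  have ha0 : (0:ℝ) < a := by linarith
  have ha1 : (0:ℝ) < a - 1 := by linarith
  -- key estimate
  have key : ∀ t : ℝ, 1 ≤ t →
      (a - 1) * (t * χ t) / c ≤ ∫ s in Icc t (a*t), χ s := by
    intro t ht
    have ht0 : (0:ℝ) < t := lt_of_lt_of_le one_pos ht
    have hta : t ≤ a * t := by nlinarith
    have hsub : Icc t (a*t) ⊆ Ici 1 := fun s hs => le_trans ht hs.1
    have hInt : IntegrableOn χ (Icc t (a*t)) := hint.mono_set hsub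
    have hlow : ∀ s ∈ Icc t (a*t), χ t / c ≤ χ s := by
      intro s hs
      have hl1 : 1 ≤ s / t := (one_le_div ht0).2 hs.1
      have hl2 : s / t ≤ a := (div_le_iff₀ ht0).2 (by linarith [hs.2])
      have h := (hOR t ht (s/t) hl1 hl2).1
      have hst : s / t * t = s := div_mul_cancel₀ s (ne_of_gt ht0)
      rw [hst] at h
      have hχt : 0 < χ t := hpos t ht
      calc χ t / c = χ t * c⁻¹ := div_eq_mul_inv _ _
        _ ≤ χ t * (χ s / χ t) := mul_le_mul_of_nonneg_left h hχt.le
        _ = χ s := by field_simp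
    have h1 : (a - 1) * (t * χ t) / c
        = (volume (Icc t (a*t))).toReal • (χ t / c) := by
      rw [Real.volume_Icc, ENNReal.toReal_ofReal (by linarith)]
      simp [smul_eq_mul]; ring
    calc (a - 1) * (t * χ t) / c
        = ∫ _ in Icc t (a*t), (χ t / c) := by rw [setIntegral_const, h1]; rfl
      _ ≤ ∫ s in Icc t (a*t), χ s := by
          refine setIntegral_mono_on (integrableOn_const ?_) hInt measurableSet_Icc hlow
          rw [Real.volume_Icc]; exact ENNReal.ofReal_ne_top
  have hnonneg : 0 ≤ᵐ[volume.restrict (Ici (1:ℝ))] χ :=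
    ae_restrict_of_forall_mem measurableSet_Ici fun x hx => (hpos x hx).le
  have hI0 : 0 ≤ ∫ s in Ici (1:ℝ), χ s := integral_nonneg_of_ae hnonneg
  -- boundedness
  have hbd : ∀ t, 1 ≤ t → t * χ t ≤ c / (a-1) * ∫ s in Ici (1:ℝ), χ s := by
    intro t ht
    have ht0 : (0:ℝ) < t := lt_of_lt_of_le one_pos ht
    have hsub : Icc t (a*t) ⊆ Ici 1 := fun s hs => le_trans ht hs.1
    have h2 : (∫ s in Icc t (a*t), χ s) ≤ ∫ s in Ici (1:ℝ), χ s :=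
      setIntegral_mono_set hint hnonneg (HasSubset.Subset.eventuallyLE hsub)
    have h3 := le_trans (key t ht) h2
    rw [div_le_iff₀ hc0] at h3
    rw [div_mul_eq_mul_div, le_div_iff₀ ha1]
    nlinarith
  constructor
  · refine ⟨c / (a-1) * ∫ s in Ici (1:ℝ), χ s, fun t ht => ?_⟩
    have : χ t ≤ t * χ t := le_mul_of_one_le_left (hpos t ht).le ht
    exact this.trans (hbd t ht)
  · -- tendsto
    set F : ℝ → ℝ := fun t => ∫ x in (1:ℝ)..t, χ x with hF
    have hII : ∀ b : ℝ, 1 ≤ b → IntervalIntegrable χ volume 1 b := by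
      intro b hb
      exact (hint.mono_set (by rw [uIcc_of_le hb]; exact Icc_subset_Ici_self)).intervalIntegrable
    have hintO : IntegrableOn χ (Ioi (1:ℝ)) := hint.mono_set Ioi_subset_Ici_self
    have h1 : Tendsto F atTop (nhds (∫ s in Ioi (1:ℝ), χ s)) :=
      intervalIntegral_tendsto_integral_Ioi 1 hintO tendsto_id
    have hat : Tendsto (fun t : ℝ => a * t) atTop atTop :=
      tendsto_id.const_mul_atTop ha0
    have h2 : Tendsto (fun t => F (a*t)) atTop (nhds (∫ s in Ioi (1:ℝ), χ s)) :=
      intervalIntegral_tendsto_integral_Ioi 1 hintO hat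
    have hg : Tendsto (fun t => c / (a-1) * (F (a*t) - F t)) atTop (nhds 0) := by
      have := ((h2.sub h1).const_mul (c / (a-1)))
      simpa using this
    refine tendsto_of_tendsto_of_tendsto_of_le_of_le' tendsto_const_nhds hg ?_ ?_
    · filter_upwards [eventually_ge_atTop (1:ℝ)] with t ht
      exact mul_nonneg (by linarith) (hpos t ht).le
    · filter_upwards [eventually_ge_atTop (1:ℝ)] with t ht
      have ht0 : (0:ℝ) < t := lt_of_lt_of_le one_pos ht
      have hta : t ≤ a * t := by nlinarith
      have heq : F (a*t) - F t = ∫ s in Icc t (a*t), χ s := by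
        rw [hF]
        rw [intervalIntegral.integral_interval_sub_left (hII (a*t) (le_trans ht hta)) (hII t ht)]
        rw [intervalIntegral.integral_of_le hta, integral_Icc_eq_integral_Ioc]
      have h3 := key t ht
      rw [← heq] at h3
      rw [div_le_iff₀ hc0] at h3
      rw [div_mul_eq_mul_div, le_div_iff₀ ha1]
      nlinarith
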